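/- Let X be a finite set, p : X → ℝ a quasi-probability distribution (∑_x p_x = 1), and {ρ^x}_{x∈X} a collection of mutually orthogonal unit-trace hermitian n×n matrices. Then S(∑_x p_x ρ^x) = H(p) + ∑_x p_x S(ρ^x), where S(A) = -∑_{λ ∈ mspec(A)} λ log|λ| and H(p) = -∑_x p_x log|p_x|. -/

import Mathlib

open Matrix Kronecker BigOperators

/-- The extended entropy `S(A) = -∑_{λ ∈ mspec(A)} λ log|λ|` (with `0 log 0 = 0`). -/
noncomputable def extEnt {k : Type*} [Fintype k] [DecidableEq k]
    (A : Matrix k k ℂ) : ℝ :=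
  -(((A.charpoly.roots).map (fun z => z.re * Real.log ‖z‖)).sum)


section Aux
open Polynomial

variable {n : ℕ}

lemma charpoly_mul_orth (A B : Matrix (Fin n) (Fin n) ℂ) (h : A * B = 0) :
    A.charpoly * B.charpoly = X ^ n * (A + B).charpoly := by
  have hc : charmatrix A * charmatrix B
      = Matrix.scalar (Fin n) (X : ℂ[X]) * charmatrix (A + B) := by
    have hAB : ((C : ℂ →+* ℂ[X]).mapMatrix A) * ((C : ℂ →+* ℂ[X]).mapMatrix B) = 0 := by
      rw [← _root_.map_mul, h, map_zero]
    have hcomm : Commute (Matrix.scalar (Fin n) (X : ℂ[X])) ((C : ℂ →+* ℂ[X]).mapMatrix A) :=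
      Matrix.scalar_commute _ (fun r' => Commute.all _ _) _
    simp only [charmatrix, map_add]
    rw [sub_mul, mul_sub, mul_sub, hAB, mul_sub, mul_add, ← hcomm.eq]
    abel
  have hdet : Matrix.det (Matrix.scalar (Fin n) (X : ℂ[X])) = X ^ n := by
    simp [Matrix.scalar, Matrix.det_diagonal]
  calc A.charpoly * B.charpoly = (charmatrix A * charmatrix B).det := (Matrix.det_mul _ _).symm
    _ = X ^ n * (A + B).charpoly := by
        rw [hc, Matrix.det_mul, hdet]; rfl

lemma extEnt_add (A B : Matrix (Fin n) (Fin n) ℂ) (h : A * B = 0) :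
    extEnt (A + B) = extEnt A + extEnt B := by
  have key := charpoly_mul_orth A B h
  have hA := Matrix.charpoly_monic A
  have hB := Matrix.charpoly_monic B
  have hAB := Matrix.charpoly_monic (A + B)
  have hroots : A.charpoly.roots + B.charpoly.roots
      = (n • ({0} : Multiset ℂ)) + (A + B).charpoly.roots := by
    rw [← Polynomial.roots_mul (mul_ne_zero hA.ne_zero hB.ne_zero), key,
      Polynomial.roots_mul (mul_ne_zero (pow_ne_zero n Polynomial.X_ne_zero) hAB.ne_zero),
      Polynomial.roots_pow, Polynomial.roots_X]
  set f : ℂ → ℝ := fun z => z.re * Real.log ‖z‖ with hf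
  have hsum := congrArg (fun s => (Multiset.map f s).sum) hroots
  simp only [Multiset.map_add, Multiset.sum_add, Multiset.nsmul_singleton,
    Multiset.map_replicate, Multiset.sum_replicate] at hsum
  have hf0 : f 0 = 0 := by simp [hf]
  rw [hf0] at hsum
  simp only [smul_zero, zero_add] at hsum
  simp only [extEnt, ← hf]
  rw [← hsum]
  ring

lemma extEnt_zero : extEnt (0 : Matrix (Fin n) (Fin n) ℂ) = 0 := by
  have h0 : (0 : Matrix (Fin n) (Fin n) ℂ) + 0 = 0 := by simp
  have := extEnt_add (0 : Matrix (Fin n) (Fin n) ℂ) 0 (by simp)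
  rw [h0] at this
  linarith

lemma charpoly_smul_roots (c : ℂ) (hc : c ≠ 0) (A : Matrix (Fin n) (Fin n) ℂ) :
    ((c • A).charpoly).roots = A.charpoly.roots.map (fun z => c * z) := by
  set φ : ℂ[X] →+* ℂ[X] := Polynomial.eval₂RingHom Polynomial.C (Polynomial.C c⁻¹ * X) with hφ
  have hφX : φ X = Polynomial.C c⁻¹ * X := Polynomial.eval₂_X _ _
  have hφC : ∀ a : ℂ, φ (Polynomial.C a) = Polynomial.C a := fun a => Polynomial.eval₂_C _ _
  have h1 : charmatrix (c • A) = Polynomial.C c • ((charmatrix A).map φ) := by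
    ext i j
    by_cases hij : i = j
    · subst hij
      simp only [charmatrix_apply_eq, Matrix.smul_apply, Matrix.map_apply, map_sub, hφX, hφC,
        Matrix.smul_apply, smul_eq_mul]
      rw [mul_sub, ← mul_assoc, ← Polynomial.C_mul, mul_inv_cancel₀ hc, Polynomial.C_1, one_mul,
        ← Polynomial.C_mul]
    · simp only [charmatrix_apply_ne _ _ _ hij, Matrix.smul_apply, Matrix.map_apply, map_neg, hφC,
        smul_eq_mul, mul_neg, ← Polynomial.C_mul]
  have hcard : A.charpoly.roots.card = n := by
    rw [Polynomial.splits_iff_card_roots.mp (IsAlgClosed.splits A.charpoly)]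
    simp
  have h2 : (c • A).charpoly = Polynomial.C c ^ n * φ A.charpoly := by
    rw [Matrix.charpoly, h1, Matrix.det_smul, Fintype.card_fin, Matrix.charpoly,
      RingHom.map_det, RingHom.mapMatrix_apply]
  have h3 : A.charpoly = (A.charpoly.roots.map fun a => X - Polynomial.C a).prod :=
    (Polynomial.prod_multiset_X_sub_C_of_monic_of_roots_card_eq A.charpoly_monic
      (by rw [hcard, Matrix.charpoly_natDegree_eq_dim, Fintype.card_fin])).symm
  have hcn : (Polynomial.C c) ^ n = (A.charpoly.roots.map fun _ : ℂ => Polynomial.C c).prod := by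
    rw [Multiset.map_const', Multiset.prod_replicate, hcard]
  have h4 : (c • A).charpoly
      = ((A.charpoly.roots.map fun z => c * z).map fun a => X - Polynomial.C a).prod := by
    conv_lhs => rw [h2, h3]
    rw [map_multiset_prod, Multiset.map_map, Multiset.map_map, hcn, ← Multiset.prod_map_mul]
    congr 1
    apply Multiset.map_congr rfl
    intro a _
    simp only [Function.comp_apply]
    rw [map_sub, hφX, hφC, mul_sub, ← mul_assoc, ← Polynomial.C_mul, mul_inv_cancel₀ hc,
      Polynomial.C_1, one_mul, ← Polynomial.C_mul]
  rw [h4, Polynomial.roots_multiset_prod_X_sub_C]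

lemma extEnt_smul (c : ℝ) (A : Matrix (Fin n) (Fin n) ℂ) :
    extEnt (((c : ℝ) : ℂ) • A) = -(c * Real.log |c| * A.trace.re) + c * extEnt A := by
  rcases eq_or_ne c 0 with hc | hc
  · subst hc
    simp [extEnt_zero, Real.log_zero]
  · have hcc : ((c : ℝ) : ℂ) ≠ 0 := by exact_mod_cast hc
    have hroots := charpoly_smul_roots ((c : ℝ) : ℂ) hcc A
    set f : ℂ → ℝ := fun z => z.re * Real.log ‖z‖ with hf
    have hpt : ∀ z : ℂ, f (((c : ℝ) : ℂ) * z) = c * Real.log |c| * z.re + c * f z := by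
      intro z
      rcases eq_or_ne z 0 with hz | hz
      · simp [hf, hz]
      · have habs : ‖((c : ℝ) : ℂ) * z‖ = |c| * ‖z‖ := by
          rw [norm_mul, Complex.norm_real, Real.norm_eq_abs]
        have hre : (((c : ℝ) : ℂ) * z).re = c * z.re := by
          simp [Complex.mul_re]
        simp only [hf, habs, hre]
        rw [Real.log_mul (abs_ne_zero.mpr hc) (norm_ne_zero_iff.mpr hz)]
        ring
    have hsumre : (A.charpoly.roots.map Complex.re).sum = A.trace.re := by
      rw [Matrix.trace_eq_sum_roots_charpoly]
      exact (map_multiset_sum Complex.reAddGroupHom A.charpoly.roots).symm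
    have : ((((c : ℝ) : ℂ) • A).charpoly.roots.map f).sum
        = c * Real.log |c| * A.trace.re + c * (A.charpoly.roots.map f).sum := by
      rw [hroots, Multiset.map_map]
      have : (f ∘ fun z => ((c : ℝ) : ℂ) * z)
          = fun z => c * Real.log |c| * z.re + c * f z := by
        funext z; exact hpt z
      rw [this, Multiset.sum_map_add, Multiset.sum_map_mul_left, Multiset.sum_map_mul_left,
        ← hsumre]
    simp only [extEnt, ← hf, this]
    ring

lemma extEnt_finset_sum {X : Type*} [DecidableEq X] (s : Finset X)
    (σ : X → Matrix (Fin n) (Fin n) ℂ)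
    (h : ∀ x y, x ≠ y → σ x * σ y = 0) :
    extEnt (∑ x ∈ s, σ x) = ∑ x ∈ s, extEnt (σ x) := by
  induction s using Finset.cons_induction with
  | empty => simpa using extEnt_zero
  | cons a s ha ih =>
    rw [Finset.sum_cons, Finset.sum_cons, extEnt_add, ih]
    rw [Finset.mul_sum]
    apply Finset.sum_eq_zero
    intro x hx
    exact h a x (fun hax => ha (hax ▸ hx))


end Aux

/-- Orthogonal affinity of the extended entropy: for a quasi-probability distribution `p`
on a finite set `X` and mutually orthogonal unit-trace hermitian matrices `ρ^x`,
`S(∑_x p_x ρ^x) = H(p) + ∑_x p_x S(ρ^x)`, where `H(p) = -∑_x p_x log|p_x|`. -/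
theorem extEnt_orthogonal_affinity (X : Type*) [Fintype X] [DecidableEq X] (n : ℕ)
    (p : X → ℝ) (hp : ∑ x, p x = 1)
    (ρ : X → Matrix (Fin n) (Fin n) ℂ)
    (hherm : ∀ x, (ρ x).IsHermitian)
    (htr : ∀ x, (ρ x).trace = 1)
    (horth : ∀ x y, x ≠ y → ρ x * ρ y = 0) :
    extEnt (∑ x, ((p x : ℝ) : ℂ) • ρ x)
      = (-(∑ x, p x * Real.log |p x|)) + ∑ x, p x * extEnt (ρ x) := by
  rw [extEnt_finset_sum Finset.univ (fun x => ((p x : ℝ) : ℂ) • ρ x)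
    (fun x y hxy => by
      rw [smul_mul_assoc, mul_smul_comm, horth x y hxy, smul_zero, smul_zero])]
  have key : ∀ x, extEnt (((p x : ℝ) : ℂ) • ρ x)
      = -(p x * Real.log |p x|) + p x * extEnt (ρ x) := by
    intro x
    rw [extEnt_smul, htr x]
    simp
  rw [Finset.sum_congr rfl (fun x _ => key x), Finset.sum_add_distrib]
  rw [← Finset.sum_neg_distrib]
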